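/- At the intermediate time T1 in the case L1 > L2 (left-continuous cap), the option value satisfies C^{A,L}(S,T1) = (S∧L1-K)·1_{{S ≥ L2∧B(T1)}} + C^{A,L2}(S,T1)·1_{{S < L2∧B(T1)}}, i.e., immediate exercise at T1 is optimal precisely when S ≥ L2∧B(T1). -/
import Mathlib


/-- At the intermediate date `T1` in the case `L1 > L2` (left-continuous cap), with
`C^{A,L}(S,T1) = max(S∧L1-K, C^{A,L2}(S,T1))`, where the constant-cap value `C^{A,L2}(·,T1)`
equals `S∧L2-K` for `S ≥ B(T1)∧L2` and strictly exceeds `S-K` for `S < B(T1)∧L2`, one has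
`C^{A,L}(S,T1) = (S∧L1-K)·1_{S ≥ L2∧B(T1)} + C^{A,L2}(S,T1)·1_{S < L2∧B(T1)}`:
immediate exercise at `T1` is optimal precisely when `S ≥ L2∧B(T1)`. -/
theorem value_at_T1_decreasing_cap (CALT1 CAL2 : ℝ → ℝ) (BT1 K L1 L2 : ℝ)
    (hK : K < L2) (h21 : L2 < L1)
    (hmax : ∀ S, 0 < S → CALT1 S = max (min S L1 - K) (CAL2 S))
    (hex : ∀ S, min L2 BT1 ≤ S → CAL2 S = min S L2 - K)
    (hcont : ∀ S, 0 < S → S < min L2 BT1 → S - K < CAL2 S) :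
    ∀ S, 0 < S →
      CALT1 S = if min L2 BT1 ≤ S then min S L1 - K else CAL2 S := by
  intro S hS
  rw [hmax S hS]
  by_cases h : min L2 BT1 ≤ S
  · rw [if_pos h, hex S h, max_eq_left]
    have : min S L2 ≤ min S L1 := min_le_min le_rfl h21.le
    linarith
  · rw [if_neg h]
    push_neg at h
    have hSL2 : S < L2 := h.trans_le (min_le_left _ _)
    have h1 : min S L1 = S := min_eq_left (hSL2.trans h21).le
    rw [h1, max_eq_right (hcont S hS h).le]
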